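/- Let 𝓕 : L²(ℝ, ℂ) → L²(ℝ, ℂ) denote the Fourier–Plancherel unitary transform, let S be the operator of multiplication by x ↦ sign(x), and for c ∈ ℝ let M_c be the unitary operator of multiplication by x ↦ exp(i c x²). For every two negative reals β, β′ < 0, the operator norms coincide: ‖S + M_{−β/2} 𝓕⁻¹ S 𝓕 M_{β/2} − M_{β/2} 𝓕⁻¹ S 𝓕 M_{−β/2}‖ = ‖S + M_{−β′/2} 𝓕⁻¹ S 𝓕 M_{β′/2} − M_{β′/2} 𝓕⁻¹ S 𝓕 M_{−β′/2}‖. (This expresses that the constant in the CCR sign inequality is absolute: all irreducible triples P, Q, R with P + Q + R = 0 and [P,Q] = −i are mutually unitarily equivalent, so ‖sgn P + sgn Q + sgn R‖ does not depend on the parameter.) -/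

import Mathlib

open MeasureTheory Complex
open scoped ENNReal NNReal

set_option maxHeartbeats 2000000
noncomputable section
namespace SignCCR
def dilFun (l : ℝ) (f : ℝ → ℂ) : ℝ → ℂ :=
  fun x => (Real.sqrt l : ℂ) * f (l * x)

lemma qmp_mul_left {l : ℝ} (hl : l ≠ 0) :
    Measure.QuasiMeasurePreserving (fun x : ℝ => l * x) volume volume := by
  refine ⟨measurable_const_mul l, ?_⟩
  rw [show (fun x : ℝ => l * x) = (l * ·) from rfl, Real.map_volume_mul_left hl]
  exact Measure.smul_absolutelyContinuous

lemma ae_comp_mul_left {l : ℝ} (hl : l ≠ 0) {g g' : ℝ → ℂ} (h : g =ᵐ[volume] g') :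
    (fun x => g (l * x)) =ᵐ[volume] (fun x => g' (l * x)) :=
  (qmp_mul_left hl).ae_eq_comp h

lemma dilFun_congr {l : ℝ} (hl : l ≠ 0) {g g' : ℝ → ℂ} (h : g =ᵐ[volume] g') :
    dilFun l g =ᵐ[volume] dilFun l g' :=
  (ae_comp_mul_left hl h).mono fun x hx => by simp only [dilFun, hx]

lemma aesm_dilFun {l : ℝ} (hl : l ≠ 0) {f : ℝ → ℂ}
    (hf : AEStronglyMeasurable f volume) :
    AEStronglyMeasurable (dilFun l f) volume := by
  have h1 : AEStronglyMeasurable f (Measure.map (l * ·) volume) := by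
    rw [Real.map_volume_mul_left hl]
    exact hf.mono_ac Measure.smul_absolutelyContinuous
  have h2 : AEStronglyMeasurable (fun x : ℝ => f (l * x)) volume :=
    h1.comp_aemeasurable (measurable_const_mul l).aemeasurable
  exact aestronglyMeasurable_const.mul h2

lemma eLpNorm_dilFun {l : ℝ} (hl : 0 < l) {f : ℝ → ℂ}
    (hf : AEStronglyMeasurable f volume) :
    eLpNorm (dilFun l f) 2 volume = eLpNorm f 2 volume := by
  have h1 : AEStronglyMeasurable f (Measure.map (l * ·) volume) := by
    rw [Real.map_volume_mul_left hl.ne']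
    exact hf.mono_ac Measure.smul_absolutelyContinuous
  have h2 : eLpNorm (fun x : ℝ => f (l * x)) 2 volume
      = eLpNorm f 2 (Measure.map (l * ·) volume) :=
    (eLpNorm_map_measure h1 (measurable_const_mul l).aemeasurable).symm
  have h3 : (fun x : ℝ => (Real.sqrt l : ℂ) * f (l * x))
      = (Real.sqrt l : ℂ) • (fun x : ℝ => f (l * x)) := rfl
  rw [show dilFun l f = (Real.sqrt l : ℂ) • (fun x : ℝ => f (l * x)) from rfl,
    eLpNorm_const_smul, h2, Real.map_volume_mul_left hl.ne',
    eLpNorm_smul_measure_of_ne_top (by norm_num : (2 : ℝ≥0∞) ≠ ∞)]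
  have e1 : ‖(Real.sqrt l : ℂ)‖ₑ = ENNReal.ofReal (Real.sqrt l) := by
    rw [← ofReal_norm]
    simp [Real.sqrt_nonneg, abs_of_nonneg]
  have e2 : ((1 : ℝ≥0∞) / 2).toReal = (2 : ℝ)⁻¹ := by
    norm_num
  rw [e1, e2, smul_eq_mul, ← mul_assoc,
    ENNReal.ofReal_rpow_of_pos (by positivity : (0:ℝ) < |l⁻¹|),
    ← ENNReal.ofReal_mul (Real.sqrt_nonneg _)]
  have : Real.sqrt l * |l⁻¹| ^ (2:ℝ)⁻¹ = 1 := by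
    rw [abs_of_pos (inv_pos.2 hl), show ((2:ℝ)⁻¹ = 1/2) by norm_num,
      ← Real.sqrt_eq_rpow, Real.sqrt_inv,
      mul_inv_cancel₀ (Real.sqrt_ne_zero'.2 hl)]
  rw [this, ENNReal.ofReal_one, one_mul]


lemma memLp_dilFun {l : ℝ} (hl : 0 < l) {f : ℝ → ℂ} (hf : MemLp f 2 volume) :
    MemLp (dilFun l f) 2 volume :=
  ⟨aesm_dilFun hl.ne' hf.1, by rw [eLpNorm_dilFun hl hf.1]; exact hf.2⟩

abbrev H := Lp ℂ 2 (volume : Measure ℝ)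

def dilL (l : ℝ) (hl : 0 < l) (f : H) : H :=
  (memLp_dilFun hl (Lp.memLp f)).toLp (dilFun l (f : ℝ → ℂ))

lemma dilL_ae (l : ℝ) (hl : 0 < l) (f : H) :
    (dilL l hl f : ℝ → ℂ) =ᵐ[volume] dilFun l (f : ℝ → ℂ) :=
  MemLp.coeFn_toLp _

lemma dilL_congr {l l' : ℝ} (hl : 0 < l) (hl' : 0 < l') (h : l = l') (f : H) :
    dilL l hl f = dilL l' hl' f := by subst h; rfl

lemma dilL_dilL {l : ℝ} (hl : 0 < l) (f : H) :
    dilL l⁻¹ (inv_pos.2 hl) (dilL l hl f) = f := by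
  apply Lp.ext
  refine (dilL_ae _ _ _).trans ?_
  refine (dilFun_congr (inv_ne_zero hl.ne') (dilL_ae l hl f)).trans ?_
  apply Filter.Eventually.of_forall
  intro x
  simp only [dilFun]
  have h1 : Real.sqrt l⁻¹ * Real.sqrt l = 1 := by
    rw [Real.sqrt_inv]; exact inv_mul_cancel₀ (Real.sqrt_ne_zero'.2 hl)
  rw [mul_inv_cancel_left₀ hl.ne', ← mul_assoc, ← Complex.ofReal_mul, h1]
  simp

lemma dilL_norm (l : ℝ) (hl : 0 < l) (f : H) : ‖dilL l hl f‖ = ‖f‖ := by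
  rw [Lp.norm_def, Lp.norm_def]
  congr 1
  rw [eLpNorm_congr_ae (dilL_ae l hl f), eLpNorm_dilFun hl (Lp.aestronglyMeasurable f)]

/-- The dilation unitary on `L²(ℝ)`. -/
def dil (l : ℝ) (hl : 0 < l) : H ≃ₗᵢ[ℂ] H where
  toFun := dilL l hl
  invFun := dilL l⁻¹ (inv_pos.2 hl)
  map_add' f g := by
    apply Lp.ext
    calc ((dilL l hl (f + g) : H) : ℝ → ℂ)
        =ᵐ[volume] dilFun l ((f + g : H) : ℝ → ℂ) := dilL_ae _ _ _
      _ =ᵐ[volume] dilFun l ((f : ℝ → ℂ) + (g : ℝ → ℂ)) :=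
          dilFun_congr hl.ne' (Lp.coeFn_add f g)
      _ =ᵐ[volume] dilFun l (f : ℝ → ℂ) + dilFun l (g : ℝ → ℂ) :=
          Filter.Eventually.of_forall (fun x => by
            simp [dilFun, Pi.add_apply, mul_add])
      _ =ᵐ[volume] (dilL l hl f : ℝ → ℂ) + (dilL l hl g : ℝ → ℂ) :=
          ((dilL_ae l hl f).add (dilL_ae l hl g)).symm
      _ =ᵐ[volume] ((dilL l hl f + dilL l hl g : H) : ℝ → ℂ) :=
          (Lp.coeFn_add _ _).symm
  map_smul' c f := by
    apply Lp.ext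
    calc ((dilL l hl (c • f) : H) : ℝ → ℂ)
        =ᵐ[volume] dilFun l ((c • f : H) : ℝ → ℂ) := dilL_ae _ _ _
      _ =ᵐ[volume] dilFun l (c • (f : ℝ → ℂ)) :=
          dilFun_congr hl.ne' (Lp.coeFn_smul c f)
      _ =ᵐ[volume] c • dilFun l (f : ℝ → ℂ) :=
          Filter.Eventually.of_forall (fun x => by
            simp [dilFun, Pi.smul_apply, smul_eq_mul]; ring)
      _ =ᵐ[volume] c • ((dilL l hl f : ℝ → ℂ)) :=
          ((dilL_ae l hl f).mono fun x hx => by simp [Pi.smul_apply, hx])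
      _ =ᵐ[volume] ((c • dilL l hl f : H) : ℝ → ℂ) :=
          (Lp.coeFn_smul _ _).symm
  left_inv f := dilL_dilL hl f
  right_inv f := by
    have := dilL_dilL (inv_pos.2 hl) f
    rwa [dilL_congr (inv_pos.2 (inv_pos.2 hl)) hl (inv_inv l)] at this
  norm_map' f := dilL_norm l hl f

end SignCCR

/-- The continuous linear map underlying a linear isometry equivalence. -/
noncomputable def unitaryCLM {E : Type*} [NormedAddCommGroup E] [NormedSpace ℂ E]
    (F : E ≃ₗᵢ[ℂ] E) : E →L[ℂ] E :=
  F.toLinearIsometry.toContinuousLinearMap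

namespace SignCCR

lemma unitaryCLM_apply {E : Type*} [NormedAddCommGroup E] [NormedSpace ℂ E]
    (F : E ≃ₗᵢ[ℂ] E) (x : E) : unitaryCLM F x = F x := rfl

lemma norm_conj {E : Type*} [NormedAddCommGroup E] [NormedSpace ℂ E]
    (e : E ≃ₗᵢ[ℂ] E) (A : E →L[ℂ] E) :
    ‖(unitaryCLM e).comp (A.comp (unitaryCLM e.symm))‖ = ‖A‖ := by
  apply le_antisymm
  · apply ContinuousLinearMap.opNorm_le_bound _ (norm_nonneg A)
    intro x
    rw [ContinuousLinearMap.comp_apply, ContinuousLinearMap.comp_apply,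
      unitaryCLM_apply, unitaryCLM_apply, e.norm_map]
    calc ‖A (e.symm x)‖ ≤ ‖A‖ * ‖e.symm x‖ := A.le_opNorm _
      _ = ‖A‖ * ‖x‖ := by rw [e.symm.norm_map]
  · apply ContinuousLinearMap.opNorm_le_bound _ (norm_nonneg _)
    intro x
    have h1 : ‖A x‖ = ‖(unitaryCLM e).comp (A.comp (unitaryCLM e.symm)) (e x)‖ := by
      rw [ContinuousLinearMap.comp_apply, ContinuousLinearMap.comp_apply,
        unitaryCLM_apply, unitaryCLM_apply, e.symm_apply_apply, e.norm_map]
    rw [h1]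
    calc ‖(unitaryCLM e).comp (A.comp (unitaryCLM e.symm)) (e x)‖
        ≤ ‖(unitaryCLM e).comp (A.comp (unitaryCLM e.symm))‖ * ‖e x‖ :=
          ContinuousLinearMap.le_opNorm _ _
      _ = ‖(unitaryCLM e).comp (A.comp (unitaryCLM e.symm))‖ * ‖x‖ := by rw [e.norm_map]

/-- The dilation as a continuous linear map. -/
def dilCLM (l : ℝ) (hl : 0 < l) : H →L[ℂ] H := unitaryCLM (dil l hl)

lemma dilCLM_apply (l : ℝ) (hl : 0 < l) (f : H) : dilCLM l hl f = dilL l hl f := rfl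

lemma dil_symm_CLM (l : ℝ) (hl : 0 < l) :
    unitaryCLM (dil l hl).symm = dilCLM l⁻¹ (inv_pos.2 hl) := by
  ext f; rfl

lemma dil_mul_inv (l : ℝ) (hl : 0 < l) :
    (dilCLM l hl) * (dilCLM l⁻¹ (inv_pos.2 hl)) = 1 := by
  refine ContinuousLinearMap.ext fun f => ?_
  have := dilL_dilL (inv_pos.2 hl) f
  rw [dilL_congr (inv_pos.2 (inv_pos.2 hl)) hl (inv_inv l)] at this
  exact this

lemma dil_inv_mul (l : ℝ) (hl : 0 < l) :
    (dilCLM l⁻¹ (inv_pos.2 hl)) * (dilCLM l hl) = 1 :=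
  ContinuousLinearMap.ext fun f => dilL_dilL hl f


lemma sign_mul_pos {l : ℝ} (hl : 0 < l) (x : ℝ) :
    Real.sign (l * x) = Real.sign x := by
  rcases lt_trichotomy x 0 with h | h | h
  · rw [Real.sign_of_neg h, Real.sign_of_neg (mul_neg_of_pos_of_neg hl h)]
  · simp [h]
  · rw [Real.sign_of_pos h, Real.sign_of_pos (mul_pos hl h)]

lemma dil_comm_sign {S : H →L[ℂ] H}
    (hS : ∀ f : H, (S f : ℝ → ℂ) =ᵐ[volume] fun x : ℝ => (Real.sign x : ℂ) * f x)
    (l : ℝ) (hl : 0 < l) : (dilCLM l hl) * S = S * (dilCLM l hl) := by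
  refine ContinuousLinearMap.ext fun f => Lp.ext ?_
  calc ((dilL l hl (S f) : H) : ℝ → ℂ)
      =ᵐ[volume] dilFun l (S f : ℝ → ℂ) := dilL_ae _ _ _
    _ =ᵐ[volume] dilFun l (fun x : ℝ => (Real.sign x : ℂ) * f x) :=
        dilFun_congr hl.ne' (hS f)
    _ =ᵐ[volume] (fun x : ℝ => (Real.sign x : ℂ) * dilFun l (f : ℝ → ℂ) x) :=
        Filter.Eventually.of_forall (fun x => by
          simp only [dilFun, sign_mul_pos hl]; ring)
    _ =ᵐ[volume] (fun x : ℝ => (Real.sign x : ℂ) * (dilL l hl f : ℝ → ℂ) x) :=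
        (dilL_ae l hl f).symm.mono fun x hx => by dsimp only; rw [hx]
    _ =ᵐ[volume] ((S (dilL l hl f) : H) : ℝ → ℂ) := (hS _).symm

lemma dil_comm_mulExp {M : ℝ → (H ≃ₗᵢ[ℂ] H)}
    (hM : ∀ c : ℝ, ∀ f : H,
      ((M c) f : ℝ → ℂ) =ᵐ[volume] fun x : ℝ => Complex.exp (Complex.I * c * x ^ 2) * f x)
    (l : ℝ) (hl : 0 < l) (c : ℝ) :
    (dilCLM l hl) * (unitaryCLM (M c)) = (unitaryCLM (M (c * l ^ 2))) * (dilCLM l hl) := by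
  refine ContinuousLinearMap.ext fun f => Lp.ext ?_
  calc ((dilL l hl ((M c) f) : H) : ℝ → ℂ)
      =ᵐ[volume] dilFun l ((M c) f : ℝ → ℂ) := dilL_ae _ _ _
    _ =ᵐ[volume] dilFun l (fun x : ℝ => Complex.exp (Complex.I * c * x ^ 2) * f x) :=
        dilFun_congr hl.ne' (hM c f)
    _ =ᵐ[volume] (fun x : ℝ =>
          Complex.exp (Complex.I * ((c * l ^ 2 : ℝ) : ℂ) * (x : ℂ) ^ 2)
            * dilFun l (f : ℝ → ℂ) x) :=
        Filter.Eventually.of_forall (fun x => by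
          dsimp only [dilFun]
          rw [show (Complex.I * ((c * l ^ 2 : ℝ) : ℂ) * (x : ℂ) ^ 2
              = Complex.I * (c : ℂ) * ((l * x : ℝ) : ℂ) ^ 2) by push_cast; ring]
          ring)
    _ =ᵐ[volume] (fun x : ℝ =>
          Complex.exp (Complex.I * ((c * l ^ 2 : ℝ) : ℂ) * (x : ℂ) ^ 2)
            * (dilL l hl f : ℝ → ℂ) x) :=
        (dilL_ae l hl f).symm.mono fun x hx => by dsimp only; rw [hx]
    _ =ᵐ[volume] (((M (c * l ^ 2)) (dilL l hl f) : H) : ℝ → ℂ) := (hM _ _).symm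

lemma fourierIntegral_congr_ae {g g' : ℝ → ℂ} (h : g =ᵐ[volume] g') :
    FourierTransform.fourier g = FourierTransform.fourier g' := by
  funext ξ
  rw [Real.fourier_eq, Real.fourier_eq]
  exact integral_congr_ae (h.mono fun x hx => by dsimp only; rw [hx])

lemma fourierIntegral_dilFun {l : ℝ} (hl : 0 < l) (f : ℝ → ℂ) :
    FourierTransform.fourier (dilFun l f) = dilFun l⁻¹ (FourierTransform.fourier f) := by
  have hsq : (l⁻¹ : ℝ) * Real.sqrt l = Real.sqrt l⁻¹ := by
    rw [Real.sqrt_inv]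
    field_simp
    exact Real.sq_sqrt hl.le
  funext ξ
  have hrhs : dilFun l⁻¹ (FourierTransform.fourier f) ξ
      = (Real.sqrt l⁻¹ : ℂ) * FourierTransform.fourier f (l⁻¹ * ξ) := rfl
  rw [hrhs, Real.fourier_eq', Real.fourier_eq']
  simp only [RCLike.inner_apply, conj_trivial, smul_eq_mul, dilFun]
  simp only [mul_comm ξ, mul_comm (l⁻¹ * ξ)]
  have h1 : (fun v : ℝ => Complex.exp (((-2 * Real.pi * (v * ξ) : ℝ) : ℂ) * Complex.I)
        * ((Real.sqrt l : ℂ) * f (l * v)))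
      = fun v : ℝ => (fun y : ℝ => (Real.sqrt l : ℂ) *
          (Complex.exp (((-2 * Real.pi * (y * (l⁻¹ * ξ)) : ℝ) : ℂ) * Complex.I) * f y)) (l * v) := by
    funext v
    dsimp only
    rw [show ((l : ℝ) * v) * (l⁻¹ * ξ) = v * ξ by field_simp]
    ring
  rw [h1, Measure.integral_comp_mul_left
    (fun y : ℝ => (Real.sqrt l : ℂ) *
      (Complex.exp (((-2 * Real.pi * (y * (l⁻¹ * ξ)) : ℝ) : ℂ) * Complex.I) * f y)) l]
  rw [integral_const_mul]
  rw [abs_of_pos (inv_pos.2 hl), Complex.real_smul, ← mul_assoc, ← Complex.ofReal_mul, hsq]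


lemma dil_fourier_key {F : H ≃ₗᵢ[ℂ] H}
    (hF : ∀ f : H, Integrable (f : ℝ → ℂ) →
      (F f : ℝ → ℂ) =ᵐ[volume] FourierTransform.fourier (f : ℝ → ℂ))
    {l : ℝ} (hl : 0 < l) (f : H) (hf : Integrable (f : ℝ → ℂ)) :
    F (dilL l hl f) = dilL l⁻¹ (inv_pos.2 hl) (F f) := by
  have hint : Integrable (dilFun l (f : ℝ → ℂ)) volume := by
    have h1 : Integrable (fun x : ℝ => (f : ℝ → ℂ) (l * x)) volume :=
      hf.comp_mul_left' hl.ne'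
    exact h1.const_mul _
  have hint2 : Integrable ((dilL l hl f : H) : ℝ → ℂ) volume :=
    hint.congr (dilL_ae l hl f).symm
  apply Lp.ext
  calc ((F (dilL l hl f) : H) : ℝ → ℂ)
      =ᵐ[volume] FourierTransform.fourier ((dilL l hl f : H) : ℝ → ℂ) := hF _ hint2
    _ = FourierTransform.fourier (dilFun l (f : ℝ → ℂ)) :=
        fourierIntegral_congr_ae (dilL_ae l hl f)
    _ = dilFun l⁻¹ (FourierTransform.fourier (f : ℝ → ℂ)) := fourierIntegral_dilFun hl _
    _ =ᵐ[volume] dilFun l⁻¹ ((F f : ℝ → ℂ)) :=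
        (dilFun_congr (inv_ne_zero hl.ne') (hF f hf)).symm
    _ =ᵐ[volume] ((dilL l⁻¹ (inv_pos.2 hl) (F f) : H) : ℝ → ℂ) := (dilL_ae _ _ _).symm

lemma dil_comm_fourier {F : H ≃ₗᵢ[ℂ] H}
    (hF : ∀ f : H, Integrable (f : ℝ → ℂ) →
      (F f : ℝ → ℂ) =ᵐ[volume] FourierTransform.fourier (f : ℝ → ℂ))
    {l : ℝ} (hl : 0 < l) :
    (unitaryCLM F) * (dilCLM l hl) = (dilCLM l⁻¹ (inv_pos.2 hl)) * (unitaryCLM F) := by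
  have hd : Dense (Submodule.span ℂ
      (Set.range ((↑) : Lp.simpleFunc ℂ 2 (volume : Measure ℝ) → H)) : Set H) :=
    Dense.mono Submodule.subset_span
      (Lp.simpleFunc.denseRange (by norm_num : (2 : ℝ≥0∞) ≠ ∞))
  refine ContinuousLinearMap.ext_on hd ?_
  rintro g ⟨s, rfl⟩
  have hint : Integrable (((s : H) : H) : ℝ → ℂ) volume := by
    have h1 : MemLp (Lp.simpleFunc.toSimpleFunc s) 2 (volume : Measure ℝ) :=
      Lp.simpleFunc.memLp s
    have h2 : Integrable (Lp.simpleFunc.toSimpleFunc s) volume :=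
      (SimpleFunc.memLp_iff_integrable (by norm_num) (by norm_num)).1 h1
    exact h2.congr (Lp.simpleFunc.toSimpleFunc_eq_toFun s)
  show (unitaryCLM F) ((dilCLM l hl) (s : H)) = (dilCLM l⁻¹ (inv_pos.2 hl)) ((unitaryCLM F) (s : H))
  exact dil_fourier_key hF hl _ hint


lemma conj_big {F : H ≃ₗᵢ[ℂ] H}
    (hF : ∀ f : H, Integrable (f : ℝ → ℂ) →
      (F f : ℝ → ℂ) =ᵐ[volume] FourierTransform.fourier (f : ℝ → ℂ))
    {S : H →L[ℂ] H}
    (hS : ∀ f : H, (S f : ℝ → ℂ) =ᵐ[volume] fun x : ℝ => (Real.sign x : ℂ) * f x)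
    {M : ℝ → (H ≃ₗᵢ[ℂ] H)}
    (hM : ∀ c : ℝ, ∀ f : H,
      ((M c) f : ℝ → ℂ) =ᵐ[volume] fun x : ℝ => Complex.exp (Complex.I * c * x ^ 2) * f x)
    {l : ℝ} (hl : 0 < l) (c : ℝ) :
    (unitaryCLM (dil l hl)).comp
      ((S + (unitaryCLM (M (-(c)))).comp ((unitaryCLM F.symm).comp (S.comp
            ((unitaryCLM F).comp (unitaryCLM (M c)))))
          - (unitaryCLM (M c)).comp ((unitaryCLM F.symm).comp (S.comp
            ((unitaryCLM F).comp (unitaryCLM (M (-(c)))))))).comp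
        (unitaryCLM (dil l hl).symm))
    = S + (unitaryCLM (M (-(c * l ^ 2)))).comp ((unitaryCLM F.symm).comp (S.comp
          ((unitaryCLM F).comp (unitaryCLM (M (c * l ^ 2))))))
        - (unitaryCLM (M (c * l ^ 2))).comp ((unitaryCLM F.symm).comp (S.comp
          ((unitaryCLM F).comp (unitaryCLM (M (-(c * l ^ 2))))))) := by
  rw [dil_symm_CLM]
  show dilCLM l hl *
      ((S + unitaryCLM (M (-c)) * (unitaryCLM F.symm * (S * (unitaryCLM F * unitaryCLM (M c))))
          - unitaryCLM (M c) * (unitaryCLM F.symm * (S * (unitaryCLM F * unitaryCLM (M (-c))))))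
        * dilCLM l⁻¹ (inv_pos.2 hl))
    = S + unitaryCLM (M (-(c * l ^ 2))) *
          (unitaryCLM F.symm * (S * (unitaryCLM F * unitaryCLM (M (c * l ^ 2)))))
        - unitaryCLM (M (c * l ^ 2)) *
          (unitaryCLM F.symm * (S * (unitaryCLM F * unitaryCLM (M (-(c * l ^ 2))))))
  set A := dilCLM l hl with hA
  set B := dilCLM l⁻¹ (inv_pos.2 hl) with hB
  set Fc := unitaryCLM F with hFcdef
  set Fc' := unitaryCLM F.symm with hFc'def
  have hFF' : Fc * Fc' = 1 := ContinuousLinearMap.ext fun x => F.apply_symm_apply x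
  have hF'F : Fc' * Fc = 1 := ContinuousLinearMap.ext fun x => F.symm_apply_apply x
  have hAS : A * S = S * A := dil_comm_sign hS l hl
  have hBS : B * S = S * B := dil_comm_sign hS l⁻¹ (inv_pos.2 hl)
  have hAM : ∀ d : ℝ, A * unitaryCLM (M d) = unitaryCLM (M (d * l ^ 2)) * A :=
    fun d => dil_comm_mulExp hM l hl d
  have hFA : Fc * A = B * Fc := dil_comm_fourier hF hl
  have hAB : A * B = 1 := dil_mul_inv l hl
  have hAF' : A * Fc' = Fc' * B := by
    calc A * Fc' = (Fc' * Fc) * (A * Fc') := by rw [hF'F, one_mul]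
      _ = Fc' * ((Fc * A) * Fc') := by rw [mul_assoc, ← mul_assoc Fc A Fc']
      _ = Fc' * ((B * Fc) * Fc') := by rw [hFA]
      _ = Fc' * (B * (Fc * Fc')) := by rw [mul_assoc B Fc Fc']
      _ = Fc' * B := by rw [hFF', mul_one]
  have wAM : ∀ (d : ℝ) (X : H →L[ℂ] H),
      A * (unitaryCLM (M d) * X) = unitaryCLM (M (d * l ^ 2)) * (A * X) :=
    fun d X => by rw [← mul_assoc, hAM d, mul_assoc]
  have wAF' : ∀ X : H →L[ℂ] H, A * (Fc' * X) = Fc' * (B * X) :=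
    fun X => by rw [← mul_assoc, hAF', mul_assoc]
  have wBS : ∀ X : H →L[ℂ] H, B * (S * X) = S * (B * X) :=
    fun X => by rw [← mul_assoc, hBS, mul_assoc]
  have wBF : ∀ X : H →L[ℂ] H, B * (Fc * X) = Fc * (A * X) :=
    fun X => by rw [← mul_assoc, ← hFA, mul_assoc]
  have hCS : A * (S * B) = S := by rw [← mul_assoc, hAS, mul_assoc, hAB, mul_one]
  have hU : ∀ d : ℝ,
      A * ((unitaryCLM (M (-d)) * (Fc' * (S * (Fc * unitaryCLM (M d))))) * B)
      = unitaryCLM (M (-d * l ^ 2)) * (Fc' * (S * (Fc * unitaryCLM (M (d * l ^ 2))))) := by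
    intro d
    calc A * ((unitaryCLM (M (-d)) * (Fc' * (S * (Fc * unitaryCLM (M d))))) * B)
        = A * (unitaryCLM (M (-d)) * (Fc' * (S * (Fc * (unitaryCLM (M d) * B))))) := by
          simp only [mul_assoc]
      _ = unitaryCLM (M (-d * l ^ 2)) * (A * (Fc' * (S * (Fc * (unitaryCLM (M d) * B))))) :=
          wAM _ _
      _ = unitaryCLM (M (-d * l ^ 2)) * (Fc' * (B * (S * (Fc * (unitaryCLM (M d) * B))))) := by
          rw [wAF']
      _ = unitaryCLM (M (-d * l ^ 2)) * (Fc' * (S * (B * (Fc * (unitaryCLM (M d) * B))))) := by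
          rw [wBS]
      _ = unitaryCLM (M (-d * l ^ 2)) * (Fc' * (S * (Fc * (A * (unitaryCLM (M d) * B))))) := by
          rw [wBF]
      _ = unitaryCLM (M (-d * l ^ 2)) *
            (Fc' * (S * (Fc * (unitaryCLM (M (d * l ^ 2)) * (A * B))))) := by
          rw [wAM]
      _ = unitaryCLM (M (-d * l ^ 2)) * (Fc' * (S * (Fc * unitaryCLM (M (d * l ^ 2))))) := by
          rw [hAB, mul_one]
  rw [sub_mul, add_mul, mul_sub, mul_add, hCS]
  have h1 := hU c
  have h2 := hU (-c)
  rw [neg_neg, neg_mul] at h2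
  rw [h1, h2, neg_mul]

end SignCCR

open SignCCR in
/-- For any two negative reals `β, β'`, the operator norms
`‖S + M_{-β/2} 𝓕⁻¹ S 𝓕 M_{β/2} - M_{β/2} 𝓕⁻¹ S 𝓕 M_{-β/2}‖` coincide: the constant in the
CCR sign inequality is absolute, since all irreducible triples `P, Q, R` with `P + Q + R = 0`
and `[P,Q] = -i` are mutually unitarily equivalent. -/
theorem sign_CCR_norm_independent_of_parameter
    (F : Lp ℂ 2 (volume : Measure ℝ) ≃ₗᵢ[ℂ] Lp ℂ 2 (volume : Measure ℝ))
    (hF : ∀ f : Lp ℂ 2 (volume : Measure ℝ), Integrable (f : ℝ → ℂ) →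
      (F f : ℝ → ℂ) =ᵐ[volume] FourierTransform.fourier (f : ℝ → ℂ))
    (S : Lp ℂ 2 (volume : Measure ℝ) →L[ℂ] Lp ℂ 2 (volume : Measure ℝ))
    (hS : ∀ f : Lp ℂ 2 (volume : Measure ℝ),
      (S f : ℝ → ℂ) =ᵐ[volume] fun x : ℝ => (Real.sign x : ℂ) * f x)
    (M : ℝ → (Lp ℂ 2 (volume : Measure ℝ) ≃ₗᵢ[ℂ] Lp ℂ 2 (volume : Measure ℝ)))
    (hM : ∀ c : ℝ, ∀ f : Lp ℂ 2 (volume : Measure ℝ),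
      ((M c) f : ℝ → ℂ) =ᵐ[volume] fun x : ℝ => Complex.exp (Complex.I * c * x ^ 2) * f x)
    (β β' : ℝ) (hβ : β < 0) (hβ' : β' < 0) :
    ‖S + (unitaryCLM (M (-β/2))).comp ((unitaryCLM F.symm).comp (S.comp
          ((unitaryCLM F).comp (unitaryCLM (M (β/2))))))
        - (unitaryCLM (M (β/2))).comp ((unitaryCLM F.symm).comp (S.comp
          ((unitaryCLM F).comp (unitaryCLM (M (-β/2))))))‖
    = ‖S + (unitaryCLM (M (-β'/2))).comp ((unitaryCLM F.symm).comp (S.comp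
          ((unitaryCLM F).comp (unitaryCLM (M (β'/2))))))
        - (unitaryCLM (M (β'/2))).comp ((unitaryCLM F.symm).comp (S.comp
          ((unitaryCLM F).comp (unitaryCLM (M (-β'/2))))))‖ := by
  have hβne : β ≠ 0 := ne_of_lt hβ
  have hpos : 0 < β' / β := div_pos_of_neg_of_neg hβ' hβ
  have hl : 0 < Real.sqrt (β' / β) := Real.sqrt_pos.2 hpos
  have hl2 : Real.sqrt (β' / β) ^ 2 = β' / β := Real.sq_sqrt hpos.le
  rw [show (-β/2 : ℝ) = -(β/2) from by ring, show (-β'/2 : ℝ) = -(β'/2) from by ring,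
    show (β'/2 : ℝ) = β/2 * Real.sqrt (β'/β) ^ 2 from by rw [hl2]; field_simp]
  rw [← conj_big hF hS hM hl (β/2), SignCCR.norm_conj]
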